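/- Let m ≡ 5 (mod 6) with m ≥ 5, n = 2^m − 1, and v = 2^{(m+1)/2} − 1. Then gcd(v, n) = 1 and for every integer a with 1 ≤ a ≤ 2^{(m−1)/2}, the binary weight of (a·v mod n) is congruent to 0 modulo 3. -/

import Mathlib

def w2 (x : ℕ) : ℕ := (Nat.digits 2 x).sum

lemma w2_rec (x : ℕ) : w2 x = x % 2 + w2 (x / 2) := by
  rcases x with _ | x
  · simp [w2]
  · rw [w2, Nat.digits_def' (by norm_num : 1 < 2) (Nat.succ_pos x)]
    simp [w2, Nat.add_comm]

lemma w2_split : ∀ k y x : ℕ, x < 2 ^ k → w2 (x + 2 ^ k * y) = w2 x + w2 y := by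
  intro k
  induction k with
  | zero => intro y x hx; interval_cases x; simp [w2]
  | succ k ih =>
    intro y x hx
    have hx2 : x / 2 < 2 ^ k := by omega
    have e : x + 2 ^ (k + 1) * y = 2 * (x / 2 + 2 ^ k * y) + x % 2 := by
      have := Nat.div_add_mod x 2; ring_nf; omega
    rw [e, w2_rec]
    have h2 : (2 * (x / 2 + 2 ^ k * y) + x % 2) % 2 = x % 2 := by omega
    have h3 : (2 * (x / 2 + 2 ^ k * y) + x % 2) / 2 = x / 2 + 2 ^ k * y := by omega
    rw [h2, h3, ih y (x / 2) hx2, w2_rec x]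
    omega

lemma w2_compl : ∀ k b : ℕ, b < 2 ^ k → w2 b + w2 (2 ^ k - 1 - b) = k := by
  intro k
  induction k with
  | zero => intro b hb; interval_cases b; simp [w2]
  | succ k ih =>
    intro b hb
    have hb2 : b / 2 < 2 ^ k := by omega
    have hpos : 0 < 2 ^ k := Nat.pow_pos (by norm_num)
    have e : 2 ^ (k + 1) - 1 - b = 2 * (2 ^ k - 1 - b / 2) + (1 - b % 2) := by
      have := Nat.div_add_mod b 2
      have : 2 ^ (k + 1) = 2 * 2 ^ k := by ring
      omega
    rw [e, w2_rec b, w2_rec (2 * (2 ^ k - 1 - b / 2) + (1 - b % 2))]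
    have h2 : (2 * (2 ^ k - 1 - b / 2) + (1 - b % 2)) % 2 = 1 - b % 2 := by omega
    have h3 : (2 * (2 ^ k - 1 - b / 2) + (1 - b % 2)) / 2 = 2 ^ k - 1 - b / 2 := by omega
    rw [h2, h3]
    have := ih (b / 2) hb2
    omega

theorem stmt7 (m : ℕ) (hm : m % 6 = 5) (hm5 : 5 ≤ m)
    (n v : ℕ) (hn : n = 2 ^ m - 1) (hv : v = 2 ^ ((m + 1) / 2) - 1) :
    Nat.gcd v n = 1 ∧
    ∀ a : ℕ, 1 ≤ a → a ≤ 2 ^ ((m - 1) / 2) → w2 (a * v % n) % 3 = 0 := by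
  set k := (m + 1) / 2 with hk
  have hmk : m = 2 * k - 1 := by omega
  have hk3 : 3 ≤ k := by omega
  have hkm3 : k % 3 = 0 := by omega
  have h1 : (1 : ℕ) < 2 ^ (k - 1) := by
    calc (1:ℕ) < 2 ^ 2 := by norm_num
    _ ≤ 2 ^ (k - 1) := Nat.pow_le_pow_right (by norm_num) (by omega)
  have hpowm : 2 ^ m = 2 ^ (k - 1) * 2 ^ k := by
    rw [← pow_add]; congr 1; omega
  have hpk : 2 ≤ 2 ^ k := by
    calc (2:ℕ) = 2 ^ 1 := rfl
    _ ≤ 2 ^ k := Nat.pow_le_pow_right (by norm_num) (by omega)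
  -- Euclid: n = 2^(k-1) * v + (2^(k-1) - 1),  v = 2 * (2^(k-1) - 1) + 1
  have hsplit : 2 ^ k = 2 * 2 ^ (k - 1) := by
    rw [← pow_succ']; congr 1; omega
  constructor
  · have hd : ∀ d : ℕ, d ∣ v → d ∣ n → d ∣ 1 := by
      intro d hdv hdn
      have h1' : d ∣ 2 ^ (k - 1) - 1 := by
        have hne : n = 2 ^ (k - 1) * v + (2 ^ (k - 1) - 1) := by
          rw [hn, hv, hpowm]
          have := Nat.mul_le_mul_left (2 ^ (k-1)) hpk
          rw [Nat.mul_sub_one] at *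
          omega
        have hds := Nat.dvd_sub hdn (Dvd.dvd.mul_left hdv (2 ^ (k - 1)))
        rwa [hne, Nat.add_sub_cancel_left] at hds
      have h2' : v = 2 * (2 ^ (k - 1) - 1) + 1 := by rw [hv, hsplit]; omega
      have := Nat.dvd_sub hdv (Dvd.dvd.mul_left h1' 2)
      rw [h2'] at this
      simpa using this
    exact Nat.dvd_one.mp (hd _ (Nat.gcd_dvd_left v n) (Nat.gcd_dvd_right v n))
  · intro a ha1 ha2
    have hkk : (m - 1) / 2 = k - 1 := by omega
    rw [hkk] at ha2
    have hav : a * v = (2 ^ k - a) + 2 ^ k * (a - 1) := by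
      have hak : a ≤ 2 ^ k := le_trans ha2 (by omega)
      obtain ⟨b, rfl⟩ : ∃ b, a = b + 1 := ⟨a - 1, by omega⟩
      have hpv : 2 ^ k = v + 1 := by omega
      rw [hpv]
      simp only [Nat.add_sub_cancel]
      have e1 : (b + 1) * v = v * b + v := by ring
      have e2 : (v + 1) * b = v * b + b := by ring
      omega
    -- a * v < n
    have hlt : a * v < n := by
      have hb : a * v ≤ 2 ^ (k - 1) * (2 ^ k - 1) := by
        rw [hv]; exact Nat.mul_le_mul_right _ ha2
      have : 2 ^ (k - 1) * (2 ^ k - 1) = 2 ^ m - 2 ^ (k - 1) := by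
        rw [Nat.mul_sub_one, hpowm]
      rw [hn]
      omega
    rw [Nat.mod_eq_of_lt hlt, hav, w2_split k (a - 1) (2 ^ k - a) (by omega)]
    have hc : 2 ^ k - a = 2 ^ k - 1 - (a - 1) := by omega
    rw [hc, Nat.add_comm]
    have := w2_compl k (a - 1) (by omega)
    omega
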